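/- For all constants C_E ≥ 1, M ≥ 0, K₁ ≥ 0, K₂ ≥ 0, K₃ ≥ 0 there exists C ≥ 0 such that the following holds. Let E be a real Banach space, A : E →L[ℝ] E with ‖exp(-tA)‖ ≤ C_E for all t ≥ 0, let g : E → E be twice continuously (Fréchet) differentiable with ‖g(x)‖ ≤ M, ‖g'(x)‖ ≤ M, ‖g''(x)‖ ≤ M for all x ∈ E, let 0 < h ≤ 1, and let u : ℝ → E solve u'(t) = -A(u t) + g(u t) on [0,h] with u 0 = u₀. Assume: (i) the map Ψ₀(σ) = exp(-(1-σ)hA)( g(exp(-σhA)u₀) ) is differentiable on [0,1] with ‖Ψ₀'(σ)‖ ≤ K₁·h for all σ ∈ [0,1] and Ψ₀' Lipschitz on [0,1] with constant K₂·h²; (ii) the map Ψ₁(σ₁,σ₂) = exp(-(1-σ₁)hA)( (Dg)(exp(-σ₁hA)u₀)( exp(-(σ₁-σ₂)hA)( g(exp(-σ₂hA)u₀) ) ) ) is Lipschitz on {0 ≤ σ₂ ≤ σ₁ ≤ 1} with constant K₃·h (with respect to the sum of the coordinate distances). Define the Lawson–Heun step: U₂ = exp(-hA)(u₀ + h • g(u₀))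 and u₁ = exp(-hA)u₀ + (h/2) • ( exp(-hA)(g(u₀)) + g(U₂) ). Then ‖u(h) - u₁‖ ≤ C · h³. -/

import Mathlib

set_option maxHeartbeats 4000000
set_option synthInstance.maxHeartbeats 400000


/-- The operator exponential `exp(tA)` of a continuous linear operator. -/
noncomputable def opexp {E : Type*} [NormedAddCommGroup E] [NormedSpace ℝ E]
    [CompleteSpace E] (A : E →L[ℝ] E) (t : ℝ) : E →L[ℝ] E :=
  NormedSpace.exp (t • A)

section Basic
variable {E : Type*} [NormedAddCommGroup E] [NormedSpace ℝ E] [CompleteSpace E] (A : E →L[ℝ] E)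

lemma opexp_zero : opexp A 0 = 1 := by
  simp [opexp, NormedSpace.exp_zero]

lemma hasDerivAt_opexp (t : ℝ) :
    HasDerivAt (fun s : ℝ => opexp A s) (A * (opexp A t)) t := by
  simpa [opexp] using hasDerivAt_exp_smul_const' (𝕂 := ℝ) A t

lemma continuous_opexp : Continuous (fun s : ℝ => opexp A s) :=
  continuous_iff_continuousAt.mpr fun t => (hasDerivAt_opexp A t).continuousAt

lemma opexp_comm_A (t : ℝ) : (opexp A t) * A = A * (opexp A t) :=
  (((Commute.refl A).smul_left t).exp_left : Commute _ A)

lemma hasDerivAt_opexp_affine (c d t : ℝ) :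
    HasDerivAt (fun s : ℝ => opexp A (c * s + d)) (c • (A * opexp A (c * t + d))) t := by
  have h1 : HasDerivAt (fun s : ℝ => c * s + d) c t := by
    simpa using ((hasDerivAt_id t).const_mul c).add_const d
  exact (hasDerivAt_opexp A (c * t + d)).scomp t h1

end Basic

section VOC
variable {E : Type*} [NormedAddCommGroup E] [NormedSpace ℝ E] [CompleteSpace E] (A : E →L[ℝ] E)
  (g : E → E) (h : ℝ) (u : ℝ → E)

/-- Variation of constants. -/
lemma voc (hg : Continuous g) (hh : 0 < h)
    (hu : ∀ t ∈ Set.Icc (0:ℝ) h, HasDerivAt u (-(A (u t)) + g (u t)) t)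
    (σ : ℝ) (hσ0 : 0 ≤ σ) (hσ1 : σ ≤ 1) :
    u (σ * h) = opexp A (-(σ * h)) (u 0)
      + h • ∫ τ in (0:ℝ)..σ, opexp A (-((σ - τ) * h)) (g (u (τ * h))) := by
  set B : ℝ → (E →L[ℝ] E) := fun τ => opexp A (-((σ - τ) * h)) with hB
  have hBd : ∀ τ : ℝ, HasDerivAt B (h • (A * B τ)) τ := by
    intro τ
    have he2 : B = fun τ : ℝ => opexp A (h * τ + -(σ * h)) := by
      funext x; simp only [hB]; congr 1; ring
    rw [he2]
    exact hasDerivAt_opexp_affine A h (-(σ * h)) τ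
  have hmemh : ∀ τ : ℝ, τ ∈ Set.uIcc (0:ℝ) σ → τ * h ∈ Set.Icc (0:ℝ) h := by
    intro τ hτ
    rw [Set.uIcc_of_le hσ0] at hτ
    exact ⟨mul_nonneg hτ.1 hh.le, by nlinarith [hτ.2]⟩
  have hucont : ∀ τ : ℝ, τ ∈ Set.uIcc (0:ℝ) σ → ContinuousAt (fun τ : ℝ => u (τ * h)) τ := by
    intro τ hτ
    exact ContinuousAt.comp (hu (τ * h) (hmemh τ hτ)).continuousAt
      ((continuous_mul_right h).continuousAt)
  have hY : ∀ τ ∈ Set.uIcc (0:ℝ) σ,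
      HasDerivAt (fun τ => B τ (u (τ * h))) (h • (B τ (g (u (τ * h))))) τ := by
    intro τ hτ
    have hu' : HasDerivAt (fun τ : ℝ => u (τ * h))
        (h • (-(A (u (τ * h))) + g (u (τ * h)))) τ := by
      have h1 : HasDerivAt (fun s : ℝ => s * h) h τ := by
        simpa using (hasDerivAt_id τ).mul_const h
      exact (hu (τ * h) (hmemh τ hτ)).scomp τ h1
    have := (hBd τ).clm_apply hu'
    convert this using 1
    simp only [hB, ContinuousLinearMap.smul_apply, map_smul, map_add, map_neg, smul_add,
      smul_neg, ← opexp_comm_A, ContinuousLinearMap.mul_apply]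
    abel
  have hint : IntervalIntegrable (fun τ => h • (B τ (g (u (τ * h))))) MeasureTheory.volume 0 σ := by
    apply ContinuousOn.intervalIntegrable
    apply ContinuousOn.smul continuousOn_const
    apply ContinuousOn.clm_apply
    · exact ((continuous_opexp A).comp (by continuity : Continuous (fun τ : ℝ => -((σ - τ) * h)))).continuousOn
    · exact fun τ hτ => (hg.continuousAt.comp (hucont τ hτ)).continuousWithinAt
  have hftc := intervalIntegral.integral_eq_sub_of_hasDerivAt hY hint
  rw [intervalIntegral.integral_smul] at hftc
  have hB0 : B 0 = opexp A (-(σ * h)) := by simp [hB]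
  have hBσ : B σ = 1 := by simp [hB, opexp_zero]
  have : h • ∫ τ in (0:ℝ)..σ, B τ (g (u (τ * h))) = u (σ * h) - opexp A (-(σ * h)) (u 0) := by
    rw [hftc, hBσ, hB0]; simp
  rw [hB] at this
  rw [this]; abel

end VOC


section Taylor
variable {E : Type*} [NormedAddCommGroup E] [NormedSpace ℝ E]

lemma gLip (g : E → E) (M : ℝ) (hgd : ∀ x, DifferentiableAt ℝ g x)
    (hM : ∀ x, ‖fderiv ℝ g x‖ ≤ M) (x y : E) : ‖g y - g x‖ ≤ M * ‖y - x‖ :=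
  Convex.norm_image_sub_le_of_norm_fderiv_le (fun z _ => hgd z) (fun z _ => hM z)
    convex_univ (Set.mem_univ x) (Set.mem_univ y)

lemma gTaylor (g : E → E) (M : ℝ) (hg : ContDiff ℝ 2 g)
    (hM2 : ∀ x, ‖iteratedFDeriv ℝ 2 g x‖ ≤ M) (x y : E) :
    ‖g y - g x - fderiv ℝ g x (y - x)‖ ≤ M * ‖y - x‖ ^ 2 := by
  have hd1 : ∀ z, DifferentiableAt ℝ g z := fun z =>
    (hg.differentiable (by norm_num)).differentiableAt
  have hd2 : Differentiable ℝ (fderiv ℝ g) := by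
    have : ContDiff ℝ 1 (fderiv ℝ g) := hg.fderiv_right (by norm_num)
    exact this.differentiable (by norm_num)
  have hbound : ∀ z, ‖fderiv ℝ (fderiv ℝ g) z‖ ≤ M := by
    intro z
    have e1 : ‖iteratedFDeriv ℝ 0 (fderiv ℝ (fderiv ℝ g)) z‖
        = ‖iteratedFDeriv ℝ 1 (fderiv ℝ g) z‖ := norm_iteratedFDeriv_fderiv
    have e2 : ‖iteratedFDeriv ℝ 1 (fderiv ℝ g) z‖ = ‖iteratedFDeriv ℝ 2 g z‖ :=
      norm_iteratedFDeriv_fderiv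
    have e0 : ‖iteratedFDeriv ℝ 0 (fderiv ℝ (fderiv ℝ g)) z‖
        = ‖fderiv ℝ (fderiv ℝ g) z‖ := norm_iteratedFDeriv_zero
    rw [← e0, e1, e2]; exact hM2 z
  have hfderivLip : ∀ z w : E, ‖fderiv ℝ g w - fderiv ℝ g z‖ ≤ M * ‖w - z‖ := fun z w =>
    Convex.norm_image_sub_le_of_norm_fderiv_le (fun a _ => (hd2 a))
      (fun a _ => hbound a) convex_univ (Set.mem_univ z) (Set.mem_univ w)
  set F : E → E := fun z => g z - fderiv ℝ g x z with hF
  have hFd : ∀ z, DifferentiableAt ℝ F z := fun z =>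
    (hd1 z).sub ((fderiv ℝ g x).differentiable.differentiableAt)
  have hFderiv : ∀ z, fderiv ℝ F z = fderiv ℝ g z - fderiv ℝ g x := by
    intro z
    rw [hF]
    rw [fderiv_fun_sub (hd1 z) ((fderiv ℝ g x).differentiable.differentiableAt)]
    rw [ContinuousLinearMap.fderiv]
  have hs : Convex ℝ (Metric.closedBall x ‖y - x‖) := convex_closedBall _ _
  have hxmem : x ∈ Metric.closedBall x ‖y - x‖ := by
    simp [Metric.mem_closedBall, norm_nonneg]
  have hymem : y ∈ Metric.closedBall x ‖y - x‖ := by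
    simp [Metric.mem_closedBall, dist_eq_norm]
  have := Convex.norm_image_sub_le_of_norm_fderiv_le (f := F)
    (fun z _ => hFd z)
    (fun z hz => by
      rw [hFderiv z]
      calc ‖fderiv ℝ g z - fderiv ℝ g x‖ ≤ M * ‖z - x‖ := hfderivLip x z
        _ ≤ M * ‖y - x‖ := by
            have hMnn : 0 ≤ M := le_trans (norm_nonneg _) (hbound x)
            have : ‖z - x‖ ≤ ‖y - x‖ := by
              rw [← dist_eq_norm]; exact Metric.mem_closedBall.mp hz
            exact mul_le_mul_of_nonneg_left this hMnn)
    hs hxmem hymem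
  have hFyx : F y - F x = g y - g x - fderiv ℝ g x (y - x) := by
    simp only [hF, map_sub]; abel
  rw [hFyx] at this
  calc ‖g y - g x - fderiv ℝ g x (y - x)‖ ≤ M * ‖y - x‖ * ‖y - x‖ := this
    _ = M * ‖y - x‖ ^ 2 := by ring
end Taylor

section Trap
variable {E : Type*} [NormedAddCommGroup E] [NormedSpace ℝ E] [CompleteSpace E]

lemma trapezoid (f : ℝ → E) (L : ℝ) (hL : 0 ≤ L)
    (hd : ∀ σ ∈ Set.Icc (0:ℝ) 1, DifferentiableAt ℝ f σ)
    (hlip : LipschitzOnWith (Real.toNNReal L) (deriv f) (Set.Icc (0:ℝ) 1)) :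
    ‖(∫ σ in (0:ℝ)..1, f σ) - (1/2 : ℝ) • (f 0 + f 1)‖ ≤ 2 * L := by
  have hdc : ContinuousOn (deriv f) (Set.Icc (0:ℝ) 1) := hlip.continuousOn
  have hlipR : ∀ s ∈ Set.Icc (0:ℝ) 1, ∀ t ∈ Set.Icc (0:ℝ) 1,
      ‖deriv f t - deriv f s‖ ≤ L * |t - s| := by
    intro s hs t ht
    have := hlip.dist_le_mul t ht s hs
    rw [dist_eq_norm, dist_eq_norm] at this
    calc ‖deriv f t - deriv f s‖ ≤ (Real.toNNReal L : ℝ) * ‖t - s‖ := this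
      _ ≤ L * |t - s| := by rw [Real.coe_toNNReal L hL, Real.norm_eq_abs]
  have hftc : ∀ σ ∈ Set.Icc (0:ℝ) 1,
      (∫ t in (0:ℝ)..σ, deriv f t) = f σ - f 0 := by
    intro σ hσ
    apply intervalIntegral.integral_eq_sub_of_hasDerivAt
    · intro t ht
      rw [Set.uIcc_of_le hσ.1] at ht
      exact (hd t ⟨ht.1, le_trans ht.2 hσ.2⟩).hasDerivAt
    · apply ContinuousOn.intervalIntegrable
      apply hdc.mono
      rw [Set.uIcc_of_le hσ.1]
      exact Set.Icc_subset_Icc le_rfl hσ.2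
  have key : ∀ σ ∈ Set.Icc (0:ℝ) 1, ‖f σ - f 0 - σ • (f 1 - f 0)‖ ≤ 2 * L := by
    intro σ hσ
    have h1 : f σ - f 0 - σ • (f 1 - f 0)
        = (∫ t in (0:ℝ)..σ, (deriv f t - deriv f σ))
          - σ • (∫ t in (0:ℝ)..1, (deriv f t - deriv f σ)) := by
      have i1 : IntervalIntegrable (deriv f) MeasureTheory.volume 0 σ := by
        apply ContinuousOn.intervalIntegrable
        apply hdc.mono; rw [Set.uIcc_of_le hσ.1]; exact Set.Icc_subset_Icc le_rfl hσ.2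
      have i2 : IntervalIntegrable (deriv f) MeasureTheory.volume 0 1 := by
        apply ContinuousOn.intervalIntegrable
        rwa [Set.uIcc_of_le (by norm_num : (0:ℝ) ≤ 1)]
      rw [intervalIntegral.integral_sub i1 intervalIntegrable_const,
        intervalIntegral.integral_sub i2 intervalIntegrable_const,
        intervalIntegral.integral_const, intervalIntegral.integral_const,
        hftc σ hσ, hftc 1 ⟨by norm_num, le_rfl⟩, smul_sub]
      simp only [sub_zero, one_smul]
      module
    rw [h1]
    have b1 : ‖∫ t in (0:ℝ)..σ, (deriv f t - deriv f σ)‖ ≤ L := by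
      have := intervalIntegral.norm_integral_le_of_norm_le_const
        (C := L) (f := fun t => deriv f t - deriv f σ) (a := 0) (b := σ) ?_
      · calc ‖∫ t in (0:ℝ)..σ, (deriv f t - deriv f σ)‖ ≤ L * |σ - 0| := this
          _ ≤ L * 1 := by
              apply mul_le_mul_of_nonneg_left _ hL
              rw [abs_of_nonneg (by linarith [hσ.1] : (0:ℝ) ≤ σ - 0)]
              linarith [hσ.2]
          _ = L := mul_one L
      · intro t ht
        rw [Set.uIoc_of_le hσ.1] at ht
        have ht' : t ∈ Set.Icc (0:ℝ) 1 := ⟨le_of_lt ht.1, le_trans ht.2 hσ.2⟩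
        calc ‖deriv f t - deriv f σ‖ ≤ L * |t - σ| := hlipR σ hσ t ht'
          _ ≤ L * 1 := by
              apply mul_le_mul_of_nonneg_left _ hL
              rw [abs_le]
              constructor <;> [linarith [ht'.1, hσ.2]; linarith [ht'.2, hσ.1]]
          _ = L := mul_one L
    have b2 : ‖σ • (∫ t in (0:ℝ)..1, (deriv f t - deriv f σ))‖ ≤ L := by
      rw [norm_smul, Real.norm_eq_abs, abs_of_nonneg hσ.1]
      have hb : ‖∫ t in (0:ℝ)..1, (deriv f t - deriv f σ)‖ ≤ L := by
        have := intervalIntegral.norm_integral_le_of_norm_le_const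
          (C := L) (f := fun t => deriv f t - deriv f σ) (a := 0) (b := 1) ?_
        · simpa using this
        · intro t ht
          rw [Set.uIoc_of_le (by norm_num : (0:ℝ) ≤ 1)] at ht
          have ht' : t ∈ Set.Icc (0:ℝ) 1 := ⟨le_of_lt ht.1, ht.2⟩
          calc ‖deriv f t - deriv f σ‖ ≤ L * |t - σ| := hlipR σ hσ t ht'
            _ ≤ L * 1 := by
                apply mul_le_mul_of_nonneg_left _ hL
                rw [abs_le]
                constructor <;> [linarith [ht'.1, hσ.2]; linarith [ht'.2, hσ.1]]
            _ = L := mul_one L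
      calc σ * ‖∫ t in (0:ℝ)..1, (deriv f t - deriv f σ)‖ ≤ 1 * L := by
            apply mul_le_mul hσ.2 hb (norm_nonneg _) (by norm_num)
        _ = L := one_mul L
    calc ‖(∫ t in (0:ℝ)..σ, (deriv f t - deriv f σ))
          - σ • (∫ t in (0:ℝ)..1, (deriv f t - deriv f σ))‖
        ≤ ‖∫ t in (0:ℝ)..σ, (deriv f t - deriv f σ)‖
          + ‖σ • (∫ t in (0:ℝ)..1, (deriv f t - deriv f σ))‖ := norm_sub_le _ _
      _ ≤ L + L := add_le_add b1 b2
      _ = 2 * L := by ring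
  -- now integrate
  have hfc : ContinuousOn f (Set.Icc (0:ℝ) 1) := fun σ hσ =>
    (hd σ hσ).continuousAt.continuousWithinAt
  have if1 : IntervalIntegrable f MeasureTheory.volume 0 1 := by
    apply ContinuousOn.intervalIntegrable
    rwa [Set.uIcc_of_le (by norm_num : (0:ℝ) ≤ 1)]
  have if2 : IntervalIntegrable (fun σ : ℝ => f 0 + σ • (f 1 - f 0))
      MeasureTheory.volume 0 1 := by
    apply ContinuousOn.intervalIntegrable
    exact (continuousOn_const.add ((continuousOn_id).smul continuousOn_const))
  have heq : (∫ σ in (0:ℝ)..1, f σ) - (1/2 : ℝ) • (f 0 + f 1)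
      = ∫ σ in (0:ℝ)..1, (f σ - f 0 - σ • (f 1 - f 0)) := by
    have : ∀ σ : ℝ, f σ - f 0 - σ • (f 1 - f 0) = f σ - (f 0 + σ • (f 1 - f 0)) := by
      intro σ; abel
    simp_rw [this]
    rw [intervalIntegral.integral_sub if1 if2]
    congr 1
    rw [intervalIntegral.integral_add intervalIntegrable_const
      (ContinuousOn.intervalIntegrable (by exact (continuousOn_id).smul continuousOn_const))]
    rw [intervalIntegral.integral_const]
    rw [intervalIntegral.integral_smul_const]
    have hid : (∫ x in (0:ℝ)..1, x) = 1/2 := by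
      open intervalIntegral in rw [integral_id]; norm_num
    rw [hid]
    norm_num
    module
  rw [heq]
  have := intervalIntegral.norm_integral_le_of_norm_le_const
    (C := 2*L) (f := fun σ => f σ - f 0 - σ • (f 1 - f 0)) (a := 0) (b := 1) ?_
  · simpa using this
  · intro t ht
    rw [Set.uIoc_of_le (by norm_num : (0:ℝ) ≤ 1)] at ht
    exact key t ⟨le_of_lt ht.1, ht.2⟩
end Trap


/-- Order theorem for Lawson methods (Theorem 4.5, case `p = 2`) applied to the Lawson
method built from Heun's second-order Runge–Kutta scheme: under `C^{1,1}` regularity (with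
the natural `h`-scaling) of the integrand of the order-one elementary integral and `C^{0,1}`
regularity of the integrand of the order-two elementary integral, the local error of the
Lawson–Heun method is `O(h³)`, uniformly in `A`. -/
theorem stmt_17 (C_E M K₁ K₂ K₃ : ℝ) (hCE : 1 ≤ C_E) (hM : 0 ≤ M)
    (hK₁ : 0 ≤ K₁) (hK₂ : 0 ≤ K₂) (hK₃ : 0 ≤ K₃) :
    ∃ C : ℝ, 0 ≤ C ∧
      ∀ (E : Type) [NormedAddCommGroup E] [NormedSpace ℝ E] [CompleteSpace E]
        (A : E →L[ℝ] E),
        (∀ t : ℝ, 0 ≤ t → ‖opexp A (-t)‖ ≤ C_E) →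
        ∀ g : E → E, ContDiff ℝ 2 g →
          (∀ x : E, ‖g x‖ ≤ M) →
          (∀ x : E, ‖fderiv ℝ g x‖ ≤ M) →
          (∀ x : E, ‖iteratedFDeriv ℝ 2 g x‖ ≤ M) →
        ∀ h : ℝ, 0 < h → h ≤ 1 →
        ∀ (u : ℝ → E) (u₀ : E),
          (∀ t ∈ Set.Icc (0 : ℝ) h, HasDerivAt u (-(A (u t)) + g (u t)) t) →
          u 0 = u₀ →
          -- (i) regularity of the order-one integrand Ψ₀
          (∀ σ ∈ Set.Icc (0 : ℝ) 1, DifferentiableAt ℝ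
            (fun σ : ℝ => opexp A (-((1 - σ) * h)) (g (opexp A (-(σ * h)) u₀))) σ) →
          (∀ σ ∈ Set.Icc (0 : ℝ) 1,
            ‖deriv (fun σ : ℝ => opexp A (-((1 - σ) * h)) (g (opexp A (-(σ * h)) u₀))) σ‖
              ≤ K₁ * h) →
          LipschitzOnWith (Real.toNNReal (K₂ * h ^ 2))
            (deriv (fun σ : ℝ => opexp A (-((1 - σ) * h)) (g (opexp A (-(σ * h)) u₀))))
            (Set.Icc (0 : ℝ) 1) →
          -- (ii) Lipschitz bound for the order-two integrand Ψ₁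
          (∀ p q : ℝ × ℝ, 0 ≤ p.2 → p.2 ≤ p.1 → p.1 ≤ 1 →
            0 ≤ q.2 → q.2 ≤ q.1 → q.1 ≤ 1 →
            ‖opexp A (-((1 - p.1) * h))
                ((fderiv ℝ g (opexp A (-(p.1 * h)) u₀))
                  (opexp A (-((p.1 - p.2) * h)) (g (opexp A (-(p.2 * h)) u₀)))) -
              opexp A (-((1 - q.1) * h))
                ((fderiv ℝ g (opexp A (-(q.1 * h)) u₀))
                  (opexp A (-((q.1 - q.2) * h)) (g (opexp A (-(q.2 * h)) u₀))))‖
              ≤ K₃ * h * (|p.1 - q.1| + |p.2 - q.2|)) →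
          -- Lawson–Heun step and local error bound
          ∀ (U₂ u₁ : E),
            U₂ = opexp A (-h) (u₀ + h • g u₀) →
            u₁ = opexp A (-h) u₀ + (h / 2) • (opexp A (-h) (g u₀) + g U₂) →
            ‖u h - u₁‖ ≤ C * h ^ 3 := by
  refine ⟨2*K₂ + 4*C_E^3*M^3 + 4*K₃ + M*K₁ + C_E^2*M^3, by positivity, ?_⟩
  intro E _ _ _ A hA g hg hgM hgM' hgM'' h hh0 hh1 u u₀ hu hu0 hΨdiff hΨderiv hΨlip hΨ₁ U₂ u₁ hU₂ hu₁
  have hCE0 : (0:ℝ) ≤ C_E := le_trans zero_le_one hCE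
  -- application bound for the semigroup
  have eb : ∀ t : ℝ, 0 ≤ t → ∀ x : E, ‖opexp A (-t) x‖ ≤ C_E * ‖x‖ := by
    intro t ht x
    calc ‖opexp A (-t) x‖ ≤ ‖opexp A (-t)‖ * ‖x‖ := (opexp A (-t)).le_opNorm x
      _ ≤ C_E * ‖x‖ := mul_le_mul_of_nonneg_right (hA t ht) (norm_nonneg x)
  have hgd : ∀ x : E, DifferentiableAt ℝ g x := fun x =>
    (hg.differentiable (by norm_num)).differentiableAt
  have hgc : Continuous g := hg.continuous
  have hgLip : ∀ x y : E, ‖g y - g x‖ ≤ M * ‖y - x‖ := gLip g M hgd hgM'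
  have hgT : ∀ x y : E, ‖g y - g x - fderiv ℝ g x (y - x)‖ ≤ M * ‖y - x‖ ^ 2 :=
    gTaylor g M hg hgM''
  have hDgapp : ∀ x z : E, ‖fderiv ℝ g x z‖ ≤ M * ‖z‖ := fun x z =>
    le_trans ((fderiv ℝ g x).le_opNorm z) (mul_le_mul_of_nonneg_right (hgM' x) (norm_nonneg z))
  -- continuity helpers
  have hoc : ∀ {f : ℝ → ℝ}, Continuous f → Continuous fun τ : ℝ => opexp A (f τ) :=
    fun hf => (continuous_opexp A).comp hf
  have hucA : ∀ τ ∈ Set.Icc (0:ℝ) 1, ContinuousAt (fun τ : ℝ => u (τ * h)) τ := by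
    intro τ hτ
    have hmem : τ * h ∈ Set.Icc (0:ℝ) h :=
      ⟨mul_nonneg hτ.1 hh0.le, by nlinarith [hτ.2]⟩
    exact ContinuousAt.comp (hu (τ * h) hmem).continuousAt
      ((continuous_mul_right h).continuousAt)
  -- the integrand for variation of constants
  have hintJ : ∀ σ ∈ Set.Icc (0:ℝ) 1, IntervalIntegrable
      (fun τ => opexp A (-((σ - τ) * h)) (g (u (τ * h)))) MeasureTheory.volume 0 σ := by
    intro σ hσ
    apply ContinuousOn.intervalIntegrable
    apply ContinuousOn.clm_apply (hoc (by continuity)).continuousOn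
    intro τ hτ
    rw [Set.uIcc_of_le hσ.1] at hτ
    exact (hgc.continuousAt.comp (hucA τ ⟨hτ.1, le_trans hτ.2 hσ.2⟩)).continuousWithinAt
  -- variation of constants
  have hvoc : ∀ σ ∈ Set.Icc (0:ℝ) 1, u (σ * h) = opexp A (-(σ * h)) u₀
      + h • ∫ τ in (0:ℝ)..σ, opexp A (-((σ - τ) * h)) (g (u (τ * h))) := by
    intro σ hσ
    rw [← hu0]
    exact voc A g h u hgc hh0 hu σ hσ.1 hσ.2
  have hJb : ∀ σ ∈ Set.Icc (0:ℝ) 1,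
      ‖∫ τ in (0:ℝ)..σ, opexp A (-((σ - τ) * h)) (g (u (τ * h)))‖ ≤ C_E * M := by
    intro σ hσ
    have := intervalIntegral.norm_integral_le_of_norm_le_const (C := C_E * M)
      (f := fun τ => opexp A (-((σ - τ) * h)) (g (u (τ * h)))) (a := 0) (b := σ) ?_
    · calc ‖∫ τ in (0:ℝ)..σ, opexp A (-((σ - τ) * h)) (g (u (τ * h)))‖
          ≤ C_E * M * |σ - 0| := this
        _ ≤ C_E * M * 1 := by
            apply mul_le_mul_of_nonneg_left _ (by positivity)
            rw [sub_zero, abs_of_nonneg hσ.1]; exact hσ.2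
        _ = C_E * M := mul_one _
    · intro τ hτ
      rw [Set.uIoc_of_le hσ.1] at hτ
      have h1 : (0:ℝ) ≤ (σ - τ) * h := mul_nonneg (by linarith [hτ.2]) hh0.le
      calc ‖opexp A (-((σ - τ) * h)) (g (u (τ * h)))‖
          ≤ C_E * ‖g (u (τ * h))‖ := eb _ h1 _
        _ ≤ C_E * M := mul_le_mul_of_nonneg_left (hgM _) hCE0
  -- distance between the exact solution and the free flow
  have hdball : ∀ σ ∈ Set.Icc (0:ℝ) 1, ‖u (σ * h) - opexp A (-(σ * h)) u₀‖ ≤ C_E * M * h := by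
    intro σ hσ
    rw [hvoc σ hσ]
    rw [add_sub_cancel_left, norm_smul, Real.norm_eq_abs, abs_of_pos hh0]
    calc h * ‖∫ τ in (0:ℝ)..σ, opexp A (-((σ - τ) * h)) (g (u (τ * h)))‖
        ≤ h * (C_E * M) := mul_le_mul_of_nonneg_left (hJb σ hσ) hh0.le
      _ = C_E * M * h := by ring
  -- named quantities
  set Ψ₀ : ℝ → E := fun σ : ℝ => opexp A (-((1 - σ) * h)) (g (opexp A (-(σ * h)) u₀)) with hΨ₀def
  set Φ : ℝ → E := fun σ : ℝ => opexp A (-((1 - σ) * h)) (g (u (σ * h))) with hΦdef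
  set D : ℝ → E := fun σ : ℝ => Φ σ - Ψ₀ σ with hDdef
  have hΦσ : ∀ σ : ℝ, Φ σ = Ψ₀ σ + D σ := by intro σ; simp only [hDdef]; abel
  -- basic values
  have hΦ0 : Φ 0 = opexp A (-h) (g u₀) := by
    simp only [hΦdef]; norm_num [hu0]
  have hΦ1 : Φ 1 = g (u h) := by
    simp only [hΦdef]; norm_num [opexp_zero]
  have hΨ00 : Ψ₀ 0 = opexp A (-h) (g u₀) := by
    simp only [hΨ₀def]; norm_num [opexp_zero]
  have hD0 : D 0 = 0 := by
    rw [hDdef]; dsimp only; rw [hΦ0, hΨ00, sub_self]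
  -- continuity
  have hΦcont : ContinuousOn Φ (Set.Icc (0:ℝ) 1) := by
    rw [hΦdef]
    apply ContinuousOn.clm_apply (hoc (by continuity)).continuousOn
    intro σ hσ
    exact (hgc.continuousAt.comp (hucA σ hσ)).continuousWithinAt
  have hΨcont : ContinuousOn Ψ₀ (Set.Icc (0:ℝ) 1) := fun σ hσ =>
    ((hΨdiff σ hσ).continuousAt).continuousWithinAt
  have hDcont : ContinuousOn D (Set.Icc (0:ℝ) 1) := by
    rw [hDdef]; exact hΦcont.sub hΨcont
  have i01 : Set.uIcc (0:ℝ) 1 = Set.Icc (0:ℝ) 1 := Set.uIcc_of_le zero_le_one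
  have iΦ : IntervalIntegrable Φ MeasureTheory.volume 0 1 :=
    ContinuousOn.intervalIntegrable (by rwa [i01])
  have iΨ : IntervalIntegrable Ψ₀ MeasureTheory.volume 0 1 :=
    ContinuousOn.intervalIntegrable (by rwa [i01])
  have iD : IntervalIntegrable D MeasureTheory.volume 0 1 :=
    ContinuousOn.intervalIntegrable (by rwa [i01])
  -- solution formula
  have huh : u h = opexp A (-h) u₀ + h • ∫ σ in (0:ℝ)..1, Φ σ := by
    have h1 := hvoc 1 ⟨zero_le_one, le_rfl⟩
    rw [one_mul] at h1
    rw [h1]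
  -- trapezoid bound for Ψ₀
  have hB1 : ‖(∫ σ in (0:ℝ)..1, Ψ₀ σ) - (1/2 : ℝ) • (Ψ₀ 0 + Ψ₀ 1)‖ ≤ 2 * (K₂ * h^2) :=
    trapezoid Ψ₀ (K₂ * h^2) (by positivity) hΨdiff hΨlip
  -- mean value bound for Ψ₀
  have hΨMVT : ∀ σ ∈ Set.Icc (0:ℝ) 1, ‖Ψ₀ σ - Ψ₀ 0‖ ≤ K₁ * h := by
    intro σ hσ
    have hdc : ContinuousOn (deriv Ψ₀) (Set.Icc (0:ℝ) 1) := hΨlip.continuousOn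
    have hftc : (∫ t in (0:ℝ)..σ, deriv Ψ₀ t) = Ψ₀ σ - Ψ₀ 0 := by
      apply intervalIntegral.integral_eq_sub_of_hasDerivAt
      · intro t ht
        rw [Set.uIcc_of_le hσ.1] at ht
        exact (hΨdiff t ⟨ht.1, le_trans ht.2 hσ.2⟩).hasDerivAt
      · apply ContinuousOn.intervalIntegrable
        apply hdc.mono
        rw [Set.uIcc_of_le hσ.1]
        exact Set.Icc_subset_Icc le_rfl hσ.2
    rw [← hftc]
    have := intervalIntegral.norm_integral_le_of_norm_le_const (C := K₁ * h)
      (f := fun t => deriv Ψ₀ t) (a := 0) (b := σ) ?_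
    · calc ‖∫ t in (0:ℝ)..σ, deriv Ψ₀ t‖ ≤ K₁ * h * |σ - 0| := this
        _ ≤ K₁ * h * 1 := by
            apply mul_le_mul_of_nonneg_left _ (by positivity)
            rw [sub_zero, abs_of_nonneg hσ.1]; exact hσ.2
        _ = K₁ * h := mul_one _
    · intro t ht
      rw [Set.uIoc_of_le hσ.1] at ht
      exact hΨderiv t ⟨le_of_lt ht.1, le_trans ht.2 hσ.2⟩
  -- the constant elementary differential P
  set P : E := opexp A (-((1 - 1) * h)) ((fderiv ℝ g (opexp A (-(1 * h)) u₀))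
      (opexp A (-((1 - 0) * h)) (g (opexp A (-((0:ℝ) * h)) u₀)))) with hPdef
  have hΨ₁' : ∀ σ τ : ℝ, 0 ≤ τ → τ ≤ σ → σ ≤ 1 →
      ‖opexp A (-((1 - σ) * h)) ((fderiv ℝ g (opexp A (-(σ * h)) u₀))
          (opexp A (-((σ - τ) * h)) (g (opexp A (-(τ * h)) u₀)))) - P‖ ≤ 2 * (K₃ * h) := by
    intro σ τ h1 h2 h3
    have key := hΨ₁ (σ, τ) (1, 0) h1 h2 h3 le_rfl zero_le_one le_rfl
    simp only [] at key
    rw [hPdef]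
    refine le_trans key ?_
    have e1 : |σ - 1| ≤ 1 := by rw [abs_le]; constructor <;> linarith
    have e2 : |τ - 0| ≤ 1 := by rw [abs_le]; constructor <;> linarith
    calc K₃ * h * (|σ - 1| + |τ - 0|) ≤ K₃ * h * 2 := by
          apply mul_le_mul_of_nonneg_left (by linarith) (by positivity)
      _ = 2 * (K₃ * h) := by ring
  -- the key second-order estimate for D
  have hDkey : ∀ σ ∈ Set.Icc (0:ℝ) 1,
      ‖D σ - (h * σ) • P‖ ≤ (2 * C_E^3 * M^3 + 2 * K₃) * h^2 := by
    intro σ hσ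
    set J : E := ∫ τ in (0:ℝ)..σ, opexp A (-((σ - τ) * h)) (g (u (τ * h))) with hJdef
    have hJint := hintJ σ hσ
    have hd : u (σ * h) - opexp A (-(σ * h)) u₀ = h • J := by
      rw [hvoc σ hσ, ← hJdef, add_sub_cancel_left]
    have hdn : ‖u (σ * h) - opexp A (-(σ * h)) u₀‖ ≤ C_E * M * h := hdball σ hσ
    set L : E →L[ℝ] E :=
      (opexp A (-((1 - σ) * h))).comp (fderiv ℝ g (opexp A (-(σ * h)) u₀)) with hLdef
    have hLJeq : (∫ τ in (0:ℝ)..σ,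
        L (opexp A (-((σ - τ) * h)) (g (u (τ * h))))) = L J := by
      rw [hJdef]; exact L.intervalIntegral_comp_comm hJint
    set r : E := g (u (σ * h)) - g (opexp A (-(σ * h)) u₀)
        - fderiv ℝ g (opexp A (-(σ * h)) u₀) (u (σ * h) - opexp A (-(σ * h)) u₀) with hrdef
    have hrb : ‖r‖ ≤ C_E^2 * M^3 * h^2 := by
      rw [hrdef]
      refine le_trans (hgT _ _) ?_
      have h2 : ‖u (σ * h) - opexp A (-(σ * h)) u₀‖^2 ≤ (C_E * M * h)^2 := by
        apply pow_le_pow_left₀ (norm_nonneg _) hdn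
      nlinarith [norm_nonneg (u (σ * h) - opexp A (-(σ * h)) u₀)]
    -- splitting identity
    have hkey2 : g (u (σ * h)) - g (opexp A (-(σ * h)) u₀)
        = h • (fderiv ℝ g (opexp A (-(σ * h)) u₀)) J + r := by
      rw [hrdef, hd, map_smul]; abel
    have hDσ : D σ = h • (L J) + opexp A (-((1 - σ) * h)) r := by
      rw [hDdef]; dsimp only
      rw [hΦdef, hΨ₀def]; dsimp only
      rw [← map_sub (opexp A (-((1 - σ) * h))), hkey2, map_add, map_smul]
      rfl
    -- pointwise comparison with P
    have hptw : ∀ τ ∈ Set.uIoc (0:ℝ) σ,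
        ‖L (opexp A (-((σ - τ) * h)) (g (u (τ * h)))) - P‖
          ≤ (C_E^3 * M^3 + 2 * K₃) * h := by
      intro τ hτ
      rw [Set.uIoc_of_le hσ.1] at hτ
      have hτ1 : τ ∈ Set.Icc (0:ℝ) 1 := ⟨le_of_lt hτ.1, le_trans hτ.2 hσ.2⟩
      have hsplit : L (opexp A (-((σ - τ) * h)) (g (u (τ * h)))) - P
          = opexp A (-((1 - σ) * h)) ((fderiv ℝ g (opexp A (-(σ * h)) u₀))
              (opexp A (-((σ - τ) * h)) (g (u (τ * h)) - g (opexp A (-(τ * h)) u₀))))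
            + (opexp A (-((1 - σ) * h)) ((fderiv ℝ g (opexp A (-(σ * h)) u₀))
              (opexp A (-((σ - τ) * h)) (g (opexp A (-(τ * h)) u₀)))) - P) := by
        rw [hLdef]
        simp only [ContinuousLinearMap.coe_comp', Function.comp_apply, map_sub]
        abel
      rw [hsplit]
      have b1 : ‖opexp A (-((1 - σ) * h)) ((fderiv ℝ g (opexp A (-(σ * h)) u₀))
          (opexp A (-((σ - τ) * h)) (g (u (τ * h)) - g (opexp A (-(τ * h)) u₀))))‖
          ≤ C_E^3 * M^3 * h := by
        have s1 : (0:ℝ) ≤ (1 - σ) * h := mul_nonneg (by linarith [hσ.2]) hh0.le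
        have s2 : (0:ℝ) ≤ (σ - τ) * h := mul_nonneg (by linarith [hτ.2]) hh0.le
        have c4 : ‖g (u (τ * h)) - g (opexp A (-(τ * h)) u₀)‖ ≤ M * (C_E * M * h) := by
          refine le_trans (hgLip _ _) ?_
          exact mul_le_mul_of_nonneg_left (hdball τ hτ1) hM
        calc ‖opexp A (-((1 - σ) * h)) ((fderiv ℝ g (opexp A (-(σ * h)) u₀))
            (opexp A (-((σ - τ) * h)) (g (u (τ * h)) - g (opexp A (-(τ * h)) u₀))))‖
            ≤ C_E * ‖(fderiv ℝ g (opexp A (-(σ * h)) u₀))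
              (opexp A (-((σ - τ) * h)) (g (u (τ * h)) - g (opexp A (-(τ * h)) u₀)))‖ :=
              eb _ s1 _
          _ ≤ C_E * (M * ‖opexp A (-((σ - τ) * h))
              (g (u (τ * h)) - g (opexp A (-(τ * h)) u₀))‖) := by
              apply mul_le_mul_of_nonneg_left (hDgapp _ _) hCE0
          _ ≤ C_E * (M * (C_E * ‖g (u (τ * h)) - g (opexp A (-(τ * h)) u₀)‖)) := by
              apply mul_le_mul_of_nonneg_left _ hCE0
              apply mul_le_mul_of_nonneg_left (eb _ s2 _) hM
          _ ≤ C_E * (M * (C_E * (M * (C_E * M * h)))) := by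
              apply mul_le_mul_of_nonneg_left _ hCE0
              apply mul_le_mul_of_nonneg_left _ hM
              apply mul_le_mul_of_nonneg_left c4 hCE0
          _ = C_E^3 * M^3 * h := by ring
      have b2 := hΨ₁' σ τ (le_of_lt hτ.1) hτ.2 hσ.2
      calc ‖opexp A (-((1 - σ) * h)) ((fderiv ℝ g (opexp A (-(σ * h)) u₀))
            (opexp A (-((σ - τ) * h)) (g (u (τ * h)) - g (opexp A (-(τ * h)) u₀))))
          + (opexp A (-((1 - σ) * h)) ((fderiv ℝ g (opexp A (-(σ * h)) u₀))
            (opexp A (-((σ - τ) * h)) (g (opexp A (-(τ * h)) u₀)))) - P)‖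
          ≤ C_E^3 * M^3 * h + 2 * (K₃ * h) := by
            refine le_trans (norm_add_le _ _) (add_le_add b1 b2)
        _ = (C_E^3 * M^3 + 2 * K₃) * h := by ring
    -- integrate the pointwise bound
    have hctLP : ContinuousOn
        (fun τ => L (opexp A (-((σ - τ) * h)) (g (u (τ * h)))) - P) (Set.uIcc 0 σ) := by
      apply ContinuousOn.sub _ continuousOn_const
      apply L.continuous.comp_continuousOn
      apply ContinuousOn.clm_apply (hoc (by continuity)).continuousOn
      intro τ hτ
      rw [Set.uIcc_of_le hσ.1] at hτ
      exact (hgc.continuousAt.comp (hucA τ ⟨hτ.1, le_trans hτ.2 hσ.2⟩)).continuousWithinAt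
    have hLPint : IntervalIntegrable
        (fun τ => L (opexp A (-((σ - τ) * h)) (g (u (τ * h)))) - P)
        MeasureTheory.volume 0 σ := ContinuousOn.intervalIntegrable hctLP
    have hLint : IntervalIntegrable
        (fun τ => L (opexp A (-((σ - τ) * h)) (g (u (τ * h)))))
        MeasureTheory.volume 0 σ := by
      have := hLPint.add (intervalIntegrable_const (c := P))
      simpa using this
    have hdiffInt : (∫ τ in (0:ℝ)..σ,
        (L (opexp A (-((σ - τ) * h)) (g (u (τ * h)))) - P)) = L J - σ • P := by
      rw [intervalIntegral.integral_sub hLint intervalIntegrable_const, hLJeq,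
        intervalIntegral.integral_const, sub_zero]
    have hmain : D σ - (h * σ) • P
        = h • (∫ τ in (0:ℝ)..σ, (L (opexp A (-((σ - τ) * h)) (g (u (τ * h)))) - P))
          + opexp A (-((1 - σ) * h)) r := by
      rw [hDσ, hdiffInt]
      module
    rw [hmain]
    have n1 : ‖h • (∫ τ in (0:ℝ)..σ,
        (L (opexp A (-((σ - τ) * h)) (g (u (τ * h)))) - P))‖
        ≤ (C_E^3 * M^3 + 2 * K₃) * h^2 := by
      rw [norm_smul, Real.norm_eq_abs, abs_of_pos hh0]
      have := intervalIntegral.norm_integral_le_of_norm_le_const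
        (C := (C_E^3 * M^3 + 2 * K₃) * h)
        (f := fun τ => L (opexp A (-((σ - τ) * h)) (g (u (τ * h)))) - P)
        (a := 0) (b := σ) hptw
      calc h * ‖∫ τ in (0:ℝ)..σ,
            (L (opexp A (-((σ - τ) * h)) (g (u (τ * h)))) - P)‖
          ≤ h * ((C_E^3 * M^3 + 2 * K₃) * h * |σ - 0|) :=
            mul_le_mul_of_nonneg_left this hh0.le
        _ ≤ h * ((C_E^3 * M^3 + 2 * K₃) * h * 1) := by
            apply mul_le_mul_of_nonneg_left _ hh0.le
            apply mul_le_mul_of_nonneg_left _ (by positivity)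
            rw [sub_zero, abs_of_nonneg hσ.1]; exact hσ.2
        _ = (C_E^3 * M^3 + 2 * K₃) * h^2 := by ring
    have n2 : ‖opexp A (-((1 - σ) * h)) r‖ ≤ C_E^3 * M^3 * h^2 := by
      have s1 : (0:ℝ) ≤ (1 - σ) * h := mul_nonneg (by linarith [hσ.2]) hh0.le
      calc ‖opexp A (-((1 - σ) * h)) r‖ ≤ C_E * ‖r‖ := eb _ s1 _
        _ ≤ C_E * (C_E^2 * M^3 * h^2) := mul_le_mul_of_nonneg_left hrb hCE0
        _ = C_E^3 * M^3 * h^2 := by ring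
    calc ‖h • (∫ τ in (0:ℝ)..σ,
          (L (opexp A (-((σ - τ) * h)) (g (u (τ * h)))) - P))
          + opexp A (-((1 - σ) * h)) r‖
        ≤ (C_E^3 * M^3 + 2 * K₃) * h^2 + C_E^3 * M^3 * h^2 :=
          le_trans (norm_add_le _ _) (add_le_add n1 n2)
      _ = (2 * C_E^3 * M^3 + 2 * K₃) * h^2 := by ring
  -- integral of the linear-in-σ model term
  have hIntP : (∫ σ in (0:ℝ)..1, (h * σ) • P) = (h/2) • P := by
    rw [intervalIntegral.integral_smul_const]
    have hid : (∫ x in (0:ℝ)..1, h * x) = h/2 := by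
      rw [intervalIntegral.integral_const_mul]
      have : (∫ x in (0:ℝ)..1, x) = 1/2 := by
        open intervalIntegral in rw [integral_id]; norm_num
      rw [this]; ring
    rw [hid]
  have iDP : IntervalIntegrable (fun σ : ℝ => D σ - (h * σ) • P)
      MeasureTheory.volume 0 1 := by
    apply IntervalIntegrable.sub iD
    apply ContinuousOn.intervalIntegrable
    exact (Continuous.smul (by continuity) continuous_const).continuousOn
  have hB2 : ‖(∫ σ in (0:ℝ)..1, D σ) - (1/2 : ℝ) • (D 0 + D 1)‖
      ≤ 2 * ((2 * C_E^3 * M^3 + 2 * K₃) * h^2) := by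
    have hiP : IntervalIntegrable (fun σ : ℝ => (h * σ) • P) MeasureTheory.volume 0 1 := by
      apply ContinuousOn.intervalIntegrable
      exact (Continuous.smul (by continuity) continuous_const).continuousOn
    have hsplit : (∫ σ in (0:ℝ)..1, D σ)
        = (∫ σ in (0:ℝ)..1, (D σ - (h * σ) • P)) + (h/2) • P := by
      rw [intervalIntegral.integral_sub iD hiP, hIntP]; abel
    have hD1 : ‖D 1 - (h * 1) • P‖ ≤ (2 * C_E^3 * M^3 + 2 * K₃) * h^2 :=
      hDkey 1 ⟨zero_le_one, le_rfl⟩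
    have hrewr : (∫ σ in (0:ℝ)..1, D σ) - (1/2 : ℝ) • (D 0 + D 1)
        = (∫ σ in (0:ℝ)..1, (D σ - (h * σ) • P)) - (1/2 : ℝ) • (D 1 - (h * 1) • P) := by
      rw [hsplit, hD0]
      module
    rw [hrewr]
    have n1 : ‖∫ σ in (0:ℝ)..1, (D σ - (h * σ) • P)‖
        ≤ (2 * C_E^3 * M^3 + 2 * K₃) * h^2 := by
      have := intervalIntegral.norm_integral_le_of_norm_le_const
        (C := (2 * C_E^3 * M^3 + 2 * K₃) * h^2)
        (f := fun σ => D σ - (h * σ) • P) (a := 0) (b := 1) ?_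
      · simpa using this
      · intro t ht
        rw [Set.uIoc_of_le zero_le_one] at ht
        exact hDkey t ⟨le_of_lt ht.1, ht.2⟩
    have n2 : ‖(1/2 : ℝ) • (D 1 - (h * 1) • P)‖
        ≤ (2 * C_E^3 * M^3 + 2 * K₃) * h^2 := by
      rw [norm_smul, Real.norm_eq_abs]
      have h12 : |(1/2 : ℝ)| = 1/2 := by norm_num
      rw [h12]
      nlinarith [hD1, norm_nonneg (D 1 - (h * 1) • P)]
    calc ‖(∫ σ in (0:ℝ)..1, (D σ - (h * σ) • P)) - (1/2 : ℝ) • (D 1 - (h * 1) • P)‖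
        ≤ ‖∫ σ in (0:ℝ)..1, (D σ - (h * σ) • P)‖ + ‖(1/2 : ℝ) • (D 1 - (h * 1) • P)‖ :=
          norm_sub_le _ _
      _ ≤ (2 * C_E^3 * M^3 + 2 * K₃) * h^2 + (2 * C_E^3 * M^3 + 2 * K₃) * h^2 :=
          add_le_add n1 n2
      _ = 2 * ((2 * C_E^3 * M^3 + 2 * K₃) * h^2) := by ring
  -- quadrature bound for Φ
  have hquad : ‖(∫ σ in (0:ℝ)..1, Φ σ) - (1/2 : ℝ) • (Φ 0 + Φ 1)‖
      ≤ 2 * (K₂ * h^2) + 2 * ((2 * C_E^3 * M^3 + 2 * K₃) * h^2) := by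
    have hIsplit : (∫ σ in (0:ℝ)..1, Φ σ)
        = (∫ σ in (0:ℝ)..1, Ψ₀ σ) + (∫ σ in (0:ℝ)..1, D σ) := by
      rw [← intervalIntegral.integral_add iΨ iD]
      apply intervalIntegral.integral_congr
      intro σ _
      exact hΦσ σ
    have hrewr : (∫ σ in (0:ℝ)..1, Φ σ) - (1/2 : ℝ) • (Φ 0 + Φ 1)
        = ((∫ σ in (0:ℝ)..1, Ψ₀ σ) - (1/2 : ℝ) • (Ψ₀ 0 + Ψ₀ 1))
          + ((∫ σ in (0:ℝ)..1, D σ) - (1/2 : ℝ) • (D 0 + D 1)) := by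
      rw [hIsplit, hΦσ 0, hΦσ 1]
      module
    rw [hrewr]
    exact le_trans (norm_add_le _ _) (add_le_add hB1 hB2)
  -- bound on ‖D σ‖
  have hDb : ∀ σ ∈ Set.Icc (0:ℝ) 1, ‖D σ‖ ≤ C_E^2 * M^2 * h := by
    intro σ hσ
    have hDσ2 : D σ = opexp A (-((1 - σ) * h)) (g (u (σ * h)) - g (opexp A (-(σ * h)) u₀)) := by
      simp only [hDdef, hΦdef, hΨ₀def]
      rw [map_sub]
    rw [hDσ2]
    have s1 : (0:ℝ) ≤ (1 - σ) * h := mul_nonneg (by linarith [hσ.2]) hh0.le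
    calc ‖opexp A (-((1 - σ) * h)) (g (u (σ * h)) - g (opexp A (-(σ * h)) u₀))‖
        ≤ C_E * ‖g (u (σ * h)) - g (opexp A (-(σ * h)) u₀)‖ := eb _ s1 _
      _ ≤ C_E * (M * (C_E * M * h)) := by
          apply mul_le_mul_of_nonneg_left _ hCE0
          exact le_trans (hgLip _ _) (mul_le_mul_of_nonneg_left (hdball σ hσ) hM)
      _ = C_E^2 * M^2 * h := by ring
  -- bound on ‖Φ σ - Φ 0‖
  have hΦ0b : ∀ σ ∈ Set.Icc (0:ℝ) 1, ‖Φ σ - Φ 0‖ ≤ (K₁ + C_E^2 * M^2) * h := by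
    intro σ hσ
    have e1 : Φ σ - Φ 0 = (Ψ₀ σ - Ψ₀ 0) + D σ := by
      rw [hΦσ σ, hΦσ 0, hD0]; abel
    rw [e1]
    calc ‖(Ψ₀ σ - Ψ₀ 0) + D σ‖ ≤ ‖Ψ₀ σ - Ψ₀ 0‖ + ‖D σ‖ := norm_add_le _ _
      _ ≤ K₁ * h + C_E^2 * M^2 * h := add_le_add (hΨMVT σ hσ) (hDb σ hσ)
      _ = (K₁ + C_E^2 * M^2) * h := by ring
  -- bound on ‖u h - U₂‖
  have hU₂' : U₂ = opexp A (-h) u₀ + h • Φ 0 := by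
    rw [hU₂, map_add, map_smul, hΦ0]
  have huU : u h - U₂ = h • ∫ σ in (0:ℝ)..1, (Φ σ - Φ 0) := by
    rw [huh, hU₂', intervalIntegral.integral_sub iΦ intervalIntegrable_const,
      intervalIntegral.integral_const]
    module
  have huUb : ‖u h - U₂‖ ≤ (K₁ + C_E^2 * M^2) * h^2 := by
    rw [huU, norm_smul, Real.norm_eq_abs, abs_of_pos hh0]
    have := intervalIntegral.norm_integral_le_of_norm_le_const
      (C := (K₁ + C_E^2 * M^2) * h)
      (f := fun σ => Φ σ - Φ 0) (a := 0) (b := 1) ?_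
    · calc h * ‖∫ σ in (0:ℝ)..1, (Φ σ - Φ 0)‖ ≤ h * ((K₁ + C_E^2 * M^2) * h * |1 - 0|) :=
          mul_le_mul_of_nonneg_left this hh0.le
        _ = (K₁ + C_E^2 * M^2) * h^2 := by rw [sub_zero, abs_one]; ring
    · intro t ht
      rw [Set.uIoc_of_le zero_le_one] at ht
      exact hΦ0b t ⟨le_of_lt ht.1, ht.2⟩
  have hgu2 : ‖Φ 1 - g U₂‖ ≤ M * ((K₁ + C_E^2 * M^2) * h^2) := by
    rw [hΦ1]
    exact le_trans (hgLip U₂ (u h)) (mul_le_mul_of_nonneg_left huUb hM)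
  -- final assembly
  have hfinal : u h - u₁
      = h • ((∫ σ in (0:ℝ)..1, Φ σ) - (1/2 : ℝ) • (Φ 0 + Φ 1))
        + (h/2) • (Φ 1 - g U₂) := by
    rw [huh, hu₁, ← hΦ0]
    match_scalars <;> ring
  rw [hfinal]
  have t1 : ‖h • ((∫ σ in (0:ℝ)..1, Φ σ) - (1/2 : ℝ) • (Φ 0 + Φ 1))‖
      ≤ h * (2 * (K₂ * h^2) + 2 * ((2 * C_E^3 * M^3 + 2 * K₃) * h^2)) := by
    rw [norm_smul, Real.norm_eq_abs, abs_of_pos hh0]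
    exact mul_le_mul_of_nonneg_left hquad hh0.le
  have t2 : ‖(h/2) • (Φ 1 - g U₂)‖ ≤ (h/2) * (M * ((K₁ + C_E^2 * M^2) * h^2)) := by
    rw [norm_smul, Real.norm_eq_abs, abs_of_pos (by positivity : (0:ℝ) < h/2)]
    exact mul_le_mul_of_nonneg_left hgu2 (by positivity)
  calc ‖h • ((∫ σ in (0:ℝ)..1, Φ σ) - (1/2 : ℝ) • (Φ 0 + Φ 1))
        + (h/2) • (Φ 1 - g U₂)‖
      ≤ h * (2 * (K₂ * h^2) + 2 * ((2 * C_E^3 * M^3 + 2 * K₃) * h^2))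
        + (h/2) * (M * ((K₁ + C_E^2 * M^2) * h^2)) :=
        le_trans (norm_add_le _ _) (add_le_add t1 t2)
    _ ≤ (2*K₂ + 4*C_E^3*M^3 + 4*K₃ + M*K₁ + C_E^2*M^3) * h^3 := by
        have h3 : (0:ℝ) ≤ h^3 := by positivity
        have hc : (0:ℝ) ≤ M*K₁ + C_E^2*M^3 := by positivity
        nlinarith [mul_nonneg hc h3]
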